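/- Let 𝒜 be a reduced inverse automaton over Ã and let u be a reduced word labeling a path in 𝒜 from state p to state p' and a path from state q to state q', where p ≠ q and p' ≠ q'. Then for every reduced inverse automaton 𝓑, 𝒜 →i^{p=q} 𝓑 if and only if 𝒜 →i^{p'=q'} 𝓑. -/

import Mathlib

open Function

/-- A letter of the symmetrized alphabet Ã: `(a, true)` stands for `a ∈ A` and
`(a, false)` for `a⁻¹ ∈ A⁻¹`. -/
abbrev Ltr (A : Type) := A × Bool

/-- Inversion of letters of Ã. -/
def Ltr.inv {A : Type} (x : Ltr A) : Ltr A := (x.1, !x.2)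

/-- The inverse `u⁻¹` of a word `u` over Ã. -/
def wordInv {A : Type} (w : List (Ltr A)) : List (Ltr A) := (w.map Ltr.inv).reverse

/-- A word over Ã is reduced iff it has no factor of the form `a a⁻¹` or `a⁻¹ a`. -/
def IsReducedWord {A : Type} (w : List (Ltr A)) : Prop :=
  ∀ (u v : List (Ltr A)) (a : A) (b : Bool), w ≠ u ++ (a, b) :: (a, !b) :: v

/-- An automaton over the symmetrized alphabet Ã, with a bundled state type `Q`,
an initial state `q0` and a set `E` of transitions. -/
structure Autom (A : Type) : Type 1 where
  Q : Type
  q0 : Q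
  E : Set (Q × Ltr A × Q)

namespace Autom

variable {A : Type}

/-- Paths using only transitions in the set `T`. -/
inductive PathOn (M : Autom A) (T : Set (M.Q × Ltr A × M.Q)) :
    M.Q → List (Ltr A) → M.Q → Prop
  | nil (q : M.Q) : PathOn M T q [] q
  | cons {p q r : M.Q} {a : Ltr A} {w : List (Ltr A)} :
      (p, a, q) ∈ T → PathOn M T q w r → PathOn M T p (a :: w) r

/-- `M.Path p u q` : the word `u` labels a path from state `p` to state `q` in `M`. -/
def Path (M : Autom A) : M.Q → List (Ltr A) → M.Q → Prop := M.PathOn M.E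

/-- The language L(𝒜) of words labeling a path from `q0` to `q0`. -/
def lang (M : Autom A) : Set (List (Ltr A)) := {w | M.Path M.q0 w M.q0}

/-- The set L(𝒜)ρ of reductions (in the free group `F(A)`) of words of L(𝒜). -/
def langRho (M : Autom A) : Set (FreeGroup A) := FreeGroup.mk '' M.lang

/-- Dual automaton: `(p,a,q)` is an edge iff `(q,a⁻¹,p)` is one. -/
def Dual (M : Autom A) : Prop := ∀ p a q, (p, a, q) ∈ M.E ↔ (q, Ltr.inv a, p) ∈ M.E

/-- Deterministic automaton. -/
def Deterministic (M : Autom A) : Prop :=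
  ∀ p a q q', (p, a, q) ∈ M.E → (p, a, q') ∈ M.E → q = q'

/-- Trim automaton: every state lies on a path from `q0` to `q0`. -/
def Trim (M : Autom A) : Prop := ∀ q, ∃ u v, M.Path M.q0 u q ∧ M.Path q v M.q0

/-- Inverse automaton: deterministic, trim and dual. -/
def IsInv (M : Autom A) : Prop := M.Deterministic ∧ M.Trim ∧ M.Dual

/-- Reduced automaton: every state lies on a path from `q0` to `q0` labeled by
a reduced word. -/
def IsRed (M : Autom A) : Prop :=
  ∀ q, ∃ u v, IsReducedWord (u ++ v) ∧ M.Path M.q0 u q ∧ M.Path q v M.q0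

/-- Homomorphisms of automata. -/
def IsHom (M N : Autom A) (φ : M.Q → N.Q) : Prop :=
  φ M.q0 = N.q0 ∧ ∀ p a q, (p, a, q) ∈ M.E → (φ p, a, φ q) ∈ N.E

/-- Isomorphism of automata. -/
def Isomorphic (M N : Autom A) : Prop :=
  ∃ φ : M.Q ≃ N.Q, M.IsHom N φ ∧ N.IsHom M φ.symm

/-- `N` is (isomorphic to) the automaton obtained from `M` by identifying the two
states `p` and `q`. -/
def IsIdentification (M : Autom A) (p q : M.Q) (N : Autom A) : Prop :=
  ∃ φ : M.Q → N.Q,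
    Surjective φ ∧ φ M.q0 = N.q0 ∧
    (∀ x y, φ x = φ y ↔ x = y ∨ (x = p ∧ y = q) ∨ (x = q ∧ y = p)) ∧
    (∀ e : N.Q × Ltr A × N.Q, e ∈ N.E ↔ ∃ e' ∈ M.E, e = (φ e'.1, e'.2.1, φ e'.2.2))

/-- `N` is (isomorphic to) the automaton obtained from `M` by deleting the state `q`
and all transitions involving it. -/
def IsDeletion (M : Autom A) (q : M.Q) (N : Autom A) : Prop :=
  ∃ φ : N.Q → M.Q,
    Injective φ ∧ Set.range φ = {x | x ≠ q} ∧ φ N.q0 = M.q0 ∧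
    (∀ e : N.Q × Ltr A × N.Q, e ∈ N.E ↔ (φ e.1, e.2.1, φ e.2.2) ∈ M.E)

/-- Elementary reduction of type 1. -/
def Red1 (M N : Autom A) : Prop :=
  ∃ p q r a, p ≠ q ∧ (r, a, p) ∈ M.E ∧ (r, a, q) ∈ M.E ∧ M.IsIdentification p q N

/-- Elementary reduction of type 2. -/
def Red2 (M N : Autom A) : Prop :=
  ∃ (p q : M.Q) (a : Ltr A), q ≠ M.q0 ∧ (p, a, q) ∈ M.E ∧ (q, Ltr.inv a, p) ∈ M.E ∧
    (∀ e ∈ M.E, e.1 = q ∨ e.2.2 = q → e = (p, a, q) ∨ e = (q, Ltr.inv a, p)) ∧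
    M.IsDeletion q N

/-- `N` is (isomorphic to) the reduction `Mρ` of `M`: perform elementary reductions
of type 1 until the automaton is deterministic, then elementary reductions of type 2
until none is possible. -/
def ReductionOf (M N : Autom A) : Prop :=
  ∃ M₁, Relation.ReflTransGen Red1 M M₁ ∧ M₁.Deterministic ∧
    Relation.ReflTransGen Red2 M₁ N ∧ ∀ N', ¬ Red2 N N'

/-- `N` is (isomorphic to) the expansion of `M` by `(p, w, q)`: a new path labeled `w`
from `p` to `q` (together with its inverse path) whose intermediate states are new. -/
def IsExpansion (M : Autom A) (p : M.Q) (w : List (Ltr A)) (q : M.Q) (N : Autom A) : Prop :=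
  w ≠ [] ∧
  ∃ (φ : M.Q → N.Q) (c : Fin (w.length + 1) → N.Q),
    Injective φ ∧ φ M.q0 = N.q0 ∧ c 0 = φ p ∧ c (Fin.last w.length) = φ q ∧
    (∀ i : Fin (w.length + 1), 0 < (i : ℕ) → (i : ℕ) < w.length → c i ∉ Set.range φ) ∧
    (∀ i j : Fin (w.length + 1), 0 < (i : ℕ) → (i : ℕ) < w.length → c i = c j → i = j) ∧
    (∀ x : N.Q, (∃ y, φ y = x) ∨ ∃ i, c i = x) ∧
    (∀ e : N.Q × Ltr A × N.Q, e ∈ N.E ↔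
      ((∃ e' ∈ M.E, e = (φ e'.1, e'.2.1, φ e'.2.2)) ∨
        ∃ i : Fin w.length,
          e = (c i.castSucc, w.get i, c i.succ) ∨
          e = (c i.succ, Ltr.inv (w.get i), c i.castSucc)))

/-- `M →exp^{(p,w,q)} N` : `N` is (isomorphic to) the reduction of the expansion
of `M` by `(p,w,q)`. -/
def ExpStep (M : Autom A) (p : M.Q) (w : List (Ltr A)) (q : M.Q) (N : Autom A) : Prop :=
  ∃ N' N'', M.IsExpansion p w q N' ∧ ReductionOf N' N'' ∧ Isomorphic N'' N

/-- `M →re^{(p,w,q)} N` : a reduced expansion, i.e. an expansion-then-reduction in which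
`M` embeds in `N`. -/
def REStep (M : Autom A) (p : M.Q) (w : List (Ltr A)) (q : M.Q) (N : Autom A) : Prop :=
  M.ExpStep p w q N ∧ ∃ ψ : M.Q → N.Q, Injective ψ ∧ M.IsHom N ψ

/-- `M →e^{w} N` : an e-step, i.e. `M →exp^{(q0,w,q0)} N`. -/
def EStep (M : Autom A) (w : List (Ltr A)) (N : Autom A) : Prop :=
  M.ExpStep M.q0 w M.q0 N

/-- `M →i^{p=q} N` : an i-step; `N` is (isomorphic to) the reduction of the automaton
obtained from `M` by identifying the distinct states `p` and `q`. -/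
def IStep (M : Autom A) (p q : M.Q) (N : Autom A) : Prop :=
  p ≠ q ∧ ∃ N' N'', M.IsIdentification p q N' ∧ ReductionOf N' N'' ∧ Isomorphic N'' N

/-- i-step, allowing `p = q` (in which case nothing happens). -/
def IStep' (M : Autom A) (p q : M.Q) (N : Autom A) : Prop :=
  (p = q ∧ M.Isomorphic N) ∨ M.IStep p q N

/-- `M →i N` : some i-step applies. -/
def IStepAny (M N : Autom A) : Prop := ∃ p q, M.IStep p q N

/-- Some reduced expansion (by a nonempty reduced word) applies. -/
def REStepAny (M N : Autom A) : Prop :=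
  ∃ p w q, IsReducedWord w ∧ M.REStep p w q N

/-- `M` is (isomorphic to) `Γ_A(H)` : a reduced inverse automaton with `L(M)ρ = H`. -/
def Represents (M : Autom A) (H : Subgroup (FreeGroup A)) : Prop :=
  M.IsInv ∧ M.IsRed ∧ M.langRho = ↑H

/-- The `q0`-diameter of an automaton: the maximum over all states `q` of the minimal
length of a reduced word labeling a path from `q0` to `q`. -/
noncomputable def diam (M : Autom A) : ℕ :=
  ⨆ q : M.Q, sInf {n | ∃ u, IsReducedWord u ∧ u.length = n ∧ M.Path M.q0 u q}

end Autom

/-- `S` is a basis of the subgroup `H`: `S` generates `H` and freely so. -/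
def IsFreeBasis {G : Type} [Group G] (S : Set G) (H : Subgroup G) : Prop :=
  Subgroup.closure S = H ∧
    Injective (FreeGroup.lift (Subtype.val : S → G) : FreeGroup S →* G)

/-- `H ≤ff K` : `H` is a free factor of `K`. -/
def FreeFactor {G : Type} [Group G] (H K : Subgroup G) : Prop :=
  ∃ B C : Set G, IsFreeBasis B H ∧ IsFreeBasis C K ∧ B ⊆ C

/-- The rank of a subgroup: the cardinality of a basis (the common value of
the cardinalities of all bases, when `H` is a finite-rank free group). -/
noncomputable def rk {G : Type} [Group G] (H : Subgroup G) : ℕ :=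
  sInf {n | ∃ S : Set G, IsFreeBasis S H ∧ S.ncard = n}

/-- `L` is a graphical free factor of `K` with respect to `A`: `Γ_A(L)` embeds
in `Γ_A(K)`. -/
def GraphicalFF {A : Type} (L K : Subgroup (FreeGroup A)) : Prop :=
  L ≤ K ∧ ∃ ML MK : Autom A, ML.Represents L ∧ MK.Represents K ∧
    ∃ ψ : ML.Q → MK.Q, Injective ψ ∧ ML.IsHom MK ψ

/-- A step (i-step or reduced expansion) from `M` to `N` of cost `c`. -/
def StepCost {A : Type} (M N : Autom A) (c : ℕ) : Prop :=
  (c = 0 ∧ Autom.IStepAny M N) ∨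
  (∃ p w q, IsReducedWord w ∧ w.length = c ∧ M.REStep p w q N)

/-- The well-order `≺` on cost sequences. -/
def costLT (k l : List ℕ) : Prop :=
  k.length < l.length ∨
  (k.length = l.length ∧ k.sum < l.sum) ∨
  (k.length = l.length ∧ k.sum = l.sum ∧ List.Lex (· < ·) k l)

/-! ### Auxiliary development for Fact 2.1 -/

namespace Autom

variable {A : Type}

lemma path_append {M : Autom A} {p q r : M.Q} {u v : List (Ltr A)}
    (h1 : M.Path p u q) (h2 : M.Path q v r) : M.Path p (u ++ v) r := by
  induction h1 with
  | nil => exact h2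
  | cons he _ ih => exact PathOn.cons he (ih h2)

lemma path_inv {M : Autom A} (hd : M.Dual) {p q : M.Q} {u : List (Ltr A)}
    (h : M.Path p u q) : M.Path q (wordInv u) p := by
  induction h with
  | nil => exact PathOn.nil _
  | cons he _ ih =>
    rename_i p' q' r' a w _
    have hw : wordInv (a :: w) = wordInv w ++ [Ltr.inv a] := by
      simp [wordInv]
    rw [hw]
    exact path_append ih (PathOn.cons ((hd _ _ _).mp he) (PathOn.nil _))

/-- The smallest equivalence relation containing `(p,q)` and closed under the
folding (determinization) rule. -/
inductive Fold (M : Autom A) (p q : M.Q) : M.Q → M.Q → Prop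
  | base : Fold M p q p q
  | refl (x : M.Q) : Fold M p q x x
  | symm {x y : M.Q} : Fold M p q x y → Fold M p q y x
  | trans {x y z : M.Q} : Fold M p q x y → Fold M p q y z → Fold M p q x z
  | fold {r r' s t : M.Q} {a : Ltr A} : Fold M p q r r' →
      (r, a, s) ∈ M.E → (r', a, t) ∈ M.E → Fold M p q s t

/-- `Fold` propagates along parallel paths. -/
lemma fold_of_paths {M : Autom A} {p q : M.Q} {u : List (Ltr A)} :
    ∀ {x y x' y' : M.Q}, M.Path x u x' → M.Path y u y' → Fold M p q x y →
      Fold M p q x' y' := by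
  induction u with
  | nil =>
    intro x y x' y' hx hy h
    cases hx; cases hy; exact h
  | cons a w ih =>
    intro x y x' y' hx hy h
    cases hx with
    | cons hex hpx =>
      cases hy with
      | cons hey hpy =>
        exact ih hpx hpy (Fold.fold h hex hey)

/-- Minimality of `Fold` among folding-closed equivalence relations. -/
lemma fold_le {M : Autom A} {p q : M.Q} {s : M.Q → M.Q → Prop}
    (hbase : s p q) (hrefl : ∀ x, s x x) (hsymm : ∀ {x y}, s x y → s y x)
    (htrans : ∀ {x y z}, s x y → s y z → s x z)
    (hfold : ∀ {r r' x y : M.Q} {a : Ltr A}, s r r' → (r, a, x) ∈ M.E →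
      (r', a, y) ∈ M.E → s x y) :
    ∀ {x y}, Fold M p q x y → s x y := by
  intro x y h
  induction h with
  | base => exact hbase
  | refl x => exact hrefl x
  | symm _ ih => exact hsymm ih
  | trans _ _ ih1 ih2 => exact htrans ih1 ih2
  | fold _ he1 he2 ih => exact hfold ih he1 he2

lemma fold_mono {M : Autom A} {p q p' q' : M.Q} (h : Fold M p' q' p q) :
    ∀ {x y}, Fold M p q x y → Fold M p' q' x y :=
  fold_le h Fold.refl Fold.symm Fold.trans (fun h e1 e2 => Fold.fold h e1 e2)

/-- The equivalence relation identifying just `p` and `q`. -/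
def pairSetoid (M : Autom A) (p q : M.Q) : Setoid M.Q where
  r x y := x = y ∨ (x = p ∧ y = q) ∨ (x = q ∧ y = p)
  iseqv := by
    refine ⟨fun x => Or.inl rfl, ?_, ?_⟩
    · rintro x y (h | ⟨h1, h2⟩ | ⟨h1, h2⟩) <;> subst_vars <;> tauto
    · rintro x y z (h | ⟨h1, h2⟩ | ⟨h1, h2⟩) (h' | ⟨h1', h2'⟩ | ⟨h1', h2'⟩) <;>
        subst_vars <;> tauto

/-- The setoid of the folding congruence. -/
def foldSetoid (M : Autom A) (p q : M.Q) : Setoid M.Q where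
  r := Fold M p q
  iseqv := ⟨Fold.refl, Fold.symm, Fold.trans⟩

/-- The quotient automaton by a setoid on the states. -/
def quotAut (M : Autom A) (s : Setoid M.Q) : Autom A where
  Q := Quotient s
  q0 := Quotient.mk s M.q0
  E := {e | ∃ e' ∈ M.E, e = (Quotient.mk s e'.1, e'.2.1, Quotient.mk s e'.2.2)}

lemma isIdent_pair (M : Autom A) (p q : M.Q) :
    M.IsIdentification p q (M.quotAut (M.pairSetoid p q)) := by
  refine ⟨Quotient.mk _, Quotient.mk_surjective, rfl, ?_, fun e => Iff.rfl⟩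
  intro x y
  exact Quotient.eq

/-- Merging the `s`-classes of `a` and `b`. -/
def mergeSetoid {Q : Type} (s : Setoid Q) (a b : Q) : Setoid Q where
  r x y := s.r x y ∨ (s.r x a ∧ s.r b y) ∨ (s.r x b ∧ s.r a y)
  iseqv := by
    obtain ⟨hr, hs, ht⟩ := s.iseqv
    refine ⟨fun x => Or.inl (hr x), ?_, ?_⟩
    · rintro x y (h | ⟨h1, h2⟩ | ⟨h1, h2⟩)
      · exact Or.inl (hs h)
      · exact Or.inr (Or.inr ⟨hs h2, hs h1⟩)
      · exact Or.inr (Or.inl ⟨hs h2, hs h1⟩)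
    · rintro x y z (h | ⟨h1, h2⟩ | ⟨h1, h2⟩) (h' | ⟨h1', h2'⟩ | ⟨h1', h2'⟩)
      · exact Or.inl (ht h h')
      · exact Or.inr (Or.inl ⟨ht h h1', h2'⟩)
      · exact Or.inr (Or.inr ⟨ht h h1', h2'⟩)
      · exact Or.inr (Or.inl ⟨h1, ht h2 h'⟩)
      · exact Or.inl (ht (ht h1 (hs (ht h2 h1'))) h2')
      · exact Or.inl (ht h1 h2')
      · exact Or.inr (Or.inr ⟨h1, ht h2 h'⟩)
      · exact Or.inl (ht h1 h2')
      · exact Or.inl (ht (ht h1 (hs (ht h2 h1'))) h2')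

lemma quot_mk_eq {M : Autom A} {s : Setoid M.Q} {x y : M.Q} :
    Quotient.mk s x = Quotient.mk s y ↔ s.r x y := Quotient.eq

lemma le_mergeSetoid {Q : Type} {s : Setoid Q} {a b : Q} {x y : Q}
    (h : s.r x y) : (mergeSetoid s a b).r x y := Or.inl h

/-- Identifying the classes of `a` and `b` in a quotient automaton. -/
lemma isIdent_merge (M : Autom A) (s : Setoid M.Q) (a b : M.Q) :
    (M.quotAut s).IsIdentification (Quotient.mk s a) (Quotient.mk s b)
      (M.quotAut (mergeSetoid s a b)) := by
  refine ⟨Quotient.lift (Quotient.mk (mergeSetoid s a b))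
    (fun x y h => Quotient.sound (le_mergeSetoid h)), ?_, rfl, ?_, ?_⟩
  · intro z
    obtain ⟨x, rfl⟩ := Quotient.mk_surjective z
    exact ⟨Quotient.mk s x, rfl⟩
  · intro X Y
    obtain ⟨x, rfl⟩ := Quotient.mk_surjective X
    obtain ⟨y, rfl⟩ := Quotient.mk_surjective Y
    show Quotient.mk _ x = Quotient.mk _ y ↔ _
    constructor
    · intro h
      rcases quot_mk_eq.mp h with h | ⟨h1, h2⟩ | ⟨h1, h2⟩
      · exact Or.inl (quot_mk_eq.mpr h)
      · exact Or.inr (Or.inl ⟨quot_mk_eq.mpr h1, quot_mk_eq.mpr (s.iseqv.symm h2)⟩)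
      · exact Or.inr (Or.inr ⟨quot_mk_eq.mpr h1, quot_mk_eq.mpr (s.iseqv.symm h2)⟩)
    · intro h
      refine quot_mk_eq.mpr ?_
      rcases h with h | ⟨h1, h2⟩ | ⟨h1, h2⟩
      · exact Or.inl (quot_mk_eq.mp h)
      · exact Or.inr (Or.inl ⟨quot_mk_eq.mp h1, s.iseqv.symm (quot_mk_eq.mp h2)⟩)
      · exact Or.inr (Or.inr ⟨quot_mk_eq.mp h1, s.iseqv.symm (quot_mk_eq.mp h2)⟩)
  · intro e
    constructor
    · rintro ⟨e', he', rfl⟩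
      exact ⟨(Quotient.mk s e'.1, e'.2.1, Quotient.mk s e'.2.2),
        ⟨e', he', rfl⟩, rfl⟩
    · rintro ⟨e'', ⟨e', he', rfl⟩, rfl⟩
      exact ⟨e', he', rfl⟩

/-- The quotient by the folding congruence is deterministic. -/
lemma quot_fold_det (M : Autom A) (p q : M.Q) :
    (M.quotAut (M.foldSetoid p q)).Deterministic := by
  rintro P a X Y ⟨⟨r1, a1, s1⟩, he1, h1⟩ ⟨⟨r2, a2, s2⟩, he2, h2⟩
  injection h1 with e1 e1'
  injection e1' with e2 e3
  injection h2 with f1 f1'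
  injection f1' with f2 f3
  subst e1 e2 e3 f2 f3
  exact Quotient.sound (Fold.fold (quot_mk_eq.mp f1) he1 he2)

lemma iso_refl (M : Autom A) : M.Isomorphic M :=
  ⟨Equiv.refl _, ⟨rfl, fun _ _ _ h => h⟩, ⟨rfl, fun _ _ _ h => h⟩⟩

lemma iso_symm {M N : Autom A} (h : M.Isomorphic N) : N.Isomorphic M := by
  obtain ⟨e, h1, h2⟩ := h
  exact ⟨e.symm, h2, by simpa using h1⟩

lemma iso_trans {M N P : Autom A} (h : M.Isomorphic N) (h' : N.Isomorphic P) :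
    M.Isomorphic P := by
  obtain ⟨e, ⟨hq, he⟩, ⟨hq', he'⟩⟩ := h
  obtain ⟨f, ⟨fq, fe⟩, ⟨fq', fe'⟩⟩ := h'
  exact ⟨e.trans f, ⟨by simp [hq, fq], fun p a r hpr => fe _ _ _ (he _ _ _ hpr)⟩,
    ⟨by simp [← hq', ← fq'], fun p a r hpr => he' _ _ _ (fe' _ _ _ hpr)⟩⟩

/-- Edge transfer along an isomorphism. -/
lemma iso_edge {M N : Autom A} (e : M.Q ≃ N.Q) (h1 : M.IsHom N e)
    (h2 : N.IsHom M e.symm) {x y : M.Q} {a : Ltr A} :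
    (x, a, y) ∈ M.E ↔ (e x, a, e y) ∈ N.E := by
  constructor
  · exact fun h => h1.2 _ _ _ h
  · intro h
    have := h2.2 _ _ _ h
    simpa using this

/-- `Red2` transports along isomorphisms of the source. -/
lemma red2_of_iso {M' M X : Autom A} (h : M'.Isomorphic M) (h2 : Red2 M X) :
    Red2 M' X := by
  obtain ⟨e, he1, he2⟩ := h
  obtain ⟨p, q, a, hq0, hpq, hqp, hexh, φ, hinj, hrng, hφ0, hE⟩ := h2
  refine ⟨e.symm p, e.symm q, a, ?_, ?_, ?_, ?_, e.symm ∘ φ, ?_, ?_, ?_, ?_⟩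
  · intro hc
    apply hq0
    have : e (e.symm q) = e M'.q0 := congrArg e hc
    simpa [he1.1] using this
  · exact (iso_edge e he1 he2).mpr (by simpa using hpq)
  · exact (iso_edge e he1 he2).mpr (by simpa using hqp)
  · rintro ⟨x, b, y⟩ hmem hor
    have hxy : (e x, b, e y) ∈ M.E := he1.2 _ _ _ hmem
    have hor' : e x = q ∨ e y = q := by
      rcases hor with h' | h'
      · left; rw [show x = e.symm q from h']; simp
      · right; rw [show y = e.symm q from h']; simp
    have := hexh _ hxy (by simpa using hor')
    rcases this with h' | h'
    · left
      injection h' with c1 c2; injection c2 with c2 c3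
      simp [Prod.ext_iff, ← c1, ← c2, ← c3]
    · right
      injection h' with c1 c2; injection c2 with c2 c3
      simp [Prod.ext_iff, ← c1, ← c2, ← c3]
  · exact e.symm.injective.comp hinj
  · ext z
    constructor
    · rintro ⟨w, rfl⟩
      intro hc
      have : φ w = q := by
        have : e (e.symm (φ w)) = e (e.symm q) := congrArg e hc
        simpa using this
      have : φ w ∈ Set.range φ := ⟨w, rfl⟩
      rw [hrng] at this
      exact this ‹φ w = q›
    · intro hz
      have : e z ≠ q := fun hc => hz (by rw [← hc]; simp)
      have : e z ∈ Set.range φ := by rw [hrng]; exact this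
      obtain ⟨w, hw⟩ := this
      exact ⟨w, by simp [hw]⟩
  · show e.symm (φ X.q0) = M'.q0
    rw [hφ0, ← he1.1]; simp
  · intro f
    constructor
    · intro h
      show (e.symm (φ f.1), f.2.1, e.symm (φ f.2.2)) ∈ M'.E
      exact (iso_edge e he1 he2).mpr (by simpa using (hE f).mp h)
    · intro h
      apply (hE f).mpr
      have := (iso_edge e he1 he2).mp h
      simpa using this

lemma red2star_of_iso {M X : Autom A} (h2 : Relation.ReflTransGen Red2 M X) :
    ∀ {M' : Autom A}, M'.Isomorphic M →
      ∃ X', Relation.ReflTransGen Red2 M' X' ∧ X'.Isomorphic X := by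
  induction h2 using Relation.ReflTransGen.head_induction_on with
  | refl => exact fun hi => ⟨_, Relation.ReflTransGen.refl, hi⟩
  | head hstep hrest _ =>
    exact fun hi => ⟨X, Relation.ReflTransGen.head (red2_of_iso hi hstep) hrest,
      iso_refl _⟩

/-- A good presentation of an automaton obtained from `M` by successive foldings
starting from the identification of `p` and `q`. -/
def GoodPres (M : Autom A) (p q : M.Q) (X : Autom A) (ψ : M.Q → X.Q) : Prop :=
  Surjective ψ ∧ ψ M.q0 = X.q0 ∧ ψ p = ψ q ∧
    (∀ x y, ψ x = ψ y → Fold M p q x y) ∧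
    (∀ e : X.Q × Ltr A × X.Q, e ∈ X.E ↔ ∃ e' ∈ M.E, e = (ψ e'.1, e'.2.1, ψ e'.2.2)) ∧
    {x | ∃ y, ψ x = ψ y ∧ x ≠ y}.Finite

lemma fiber_finite {Q R : Type} {ψ : Q → R} (hfin : {x | ∃ y, ψ x = ψ y ∧ x ≠ y}.Finite)
    (P : R) : {x | ψ x = P}.Finite := by
  by_cases hs : {x | ψ x = P}.Subsingleton
  · exact hs.finite
  · apply hfin.subset
    intro x hx
    rw [Set.not_subsingleton_iff] at hs
    obtain ⟨u, hu, v, hv, huv⟩ := hs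
    rcases eq_or_ne x u with rfl | hxu
    · exact ⟨v, by rw [hx, hv], huv⟩
    · exact ⟨u, by rw [hx, hu], hxu⟩

lemma goodPres_step {M : Autom A} {p q : M.Q} {X Y : Autom A} {ψ : M.Q → X.Q}
    (hg : GoodPres M p q X ψ) (hstep : Red1 X Y) : ∃ ψ', GoodPres M p q Y ψ' := by
  obtain ⟨hsurj, hq0, hpq, hker, hE, hfin⟩ := hg
  obtain ⟨P, Q, R, α, hPQ, heP, heQ, φ, hφsurj, hφ0, hfib, hφE⟩ := hstep
  refine ⟨φ ∘ ψ, hφsurj.comp hsurj, by simp [hq0, hφ0], by simp [congrArg φ hpq], ?_, ?_, ?_⟩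
  · -- kernel contained in Fold
    intro x y hxy
    rcases (hfib (ψ x) (ψ y)).mp hxy with h | ⟨h1, h2⟩ | ⟨h1, h2⟩
    · exact hker _ _ h
    · obtain ⟨e1, he1, hh1⟩ := (hE _).mp heP
      obtain ⟨e2, he2, hh2⟩ := (hE _).mp heQ
      obtain ⟨c1, c2, c3⟩ : R = ψ e1.1 ∧ α = e1.2.1 ∧ P = ψ e1.2.2 := by
        simpa [Prod.ext_iff] using hh1
      obtain ⟨d1, d2, d3⟩ : R = ψ e2.1 ∧ α = e2.2.1 ∧ Q = ψ e2.2.2 := by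
        simpa [Prod.ext_iff] using hh2
      have hr : Fold M p q e1.1 e2.1 := hker _ _ (by rw [← c1, ← d1])
      have hst : Fold M p q e1.2.2 e2.2.2 := by
        have he1' : (e1.1, e1.2.1, e1.2.2) ∈ M.E := he1
        have he2' : (e2.1, e1.2.1, e2.2.2) ∈ M.E := by rw [c2.symm.trans d2]; exact he2
        exact Fold.fold hr he1' he2'
      have h1' : Fold M p q x e1.2.2 := hker _ _ (by rw [← c3, ← h1])
      have h2' : Fold M p q e2.2.2 y := hker _ _ (by rw [← d3, ← h2])
      exact h1'.trans (hst.trans h2')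
    · obtain ⟨e1, he1, hh1⟩ := (hE _).mp heP
      obtain ⟨e2, he2, hh2⟩ := (hE _).mp heQ
      obtain ⟨c1, c2, c3⟩ : R = ψ e1.1 ∧ α = e1.2.1 ∧ P = ψ e1.2.2 := by
        simpa [Prod.ext_iff] using hh1
      obtain ⟨d1, d2, d3⟩ : R = ψ e2.1 ∧ α = e2.2.1 ∧ Q = ψ e2.2.2 := by
        simpa [Prod.ext_iff] using hh2
      have hr : Fold M p q e1.1 e2.1 := hker _ _ (by rw [← c1, ← d1])
      have hst : Fold M p q e1.2.2 e2.2.2 := by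
        have he1' : (e1.1, e1.2.1, e1.2.2) ∈ M.E := he1
        have he2' : (e2.1, e1.2.1, e2.2.2) ∈ M.E := by rw [c2.symm.trans d2]; exact he2
        exact Fold.fold hr he1' he2'
      have h1' : Fold M p q x e2.2.2 := hker _ _ (by rw [← d3, ← h1])
      have h2' : Fold M p q e1.2.2 y := hker _ _ (by rw [← c3, ← h2])
      exact h1'.trans (hst.symm.trans h2')
  · -- edges
    intro e
    rw [hφE e]
    constructor
    · rintro ⟨e'', he'', rfl⟩
      obtain ⟨e', he', rfl⟩ := (hE _).mp he''
      exact ⟨e', he', rfl⟩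
    · rintro ⟨e', he', rfl⟩
      exact ⟨(ψ e'.1, e'.2.1, ψ e'.2.2), (hE _).mpr ⟨e', he', rfl⟩, rfl⟩
  · -- finiteness of the support
    have : {x | ∃ y, (φ ∘ ψ) x = (φ ∘ ψ) y ∧ x ≠ y} ⊆
        {x | ∃ y, ψ x = ψ y ∧ x ≠ y} ∪ {x | ψ x = P} ∪ {x | ψ x = Q} := by
      rintro x ⟨y, hxy, hne⟩
      rcases (hfib (ψ x) (ψ y)).mp hxy with h | ⟨h1, h2⟩ | ⟨h1, h2⟩
      · exact Or.inl (Or.inl ⟨y, h, hne⟩)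
      · exact Or.inl (Or.inr h1)
      · exact Or.inr h1
    exact ((hfin.union (fiber_finite hfin P)).union (fiber_finite hfin Q)).subset this

lemma goodPres_chain {M : Autom A} {p q : M.Q} {X Y : Autom A}
    (hr : Relation.ReflTransGen Red1 X Y) :
    (∃ ψ, GoodPres M p q X ψ) → ∃ ψ', GoodPres M p q Y ψ' := by
  induction hr with
  | refl => exact id
  | tail _ hstep ih => exact fun h => let ⟨ψ, hψ⟩ := ih h; goodPres_step hψ hstep

lemma goodPres_base {M : Autom A} {p q : M.Q} {N' : Autom A}
    (hid : M.IsIdentification p q N') : ∃ ψ, GoodPres M p q N' ψ := by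
  obtain ⟨φ, hsurj, h0, hfib, hE⟩ := hid
  refine ⟨φ, hsurj, h0, (hfib p q).mpr (Or.inr (Or.inl ⟨rfl, rfl⟩)), ?_, hE, ?_⟩
  · intro x y hxy
    rcases (hfib x y).mp hxy with rfl | ⟨rfl, rfl⟩ | ⟨rfl, rfl⟩
    · exact Fold.refl _
    · exact Fold.base
    · exact Fold.base.symm
  · apply (Set.finite_singleton q |>.insert p).subset
    rintro x ⟨y, hxy, hne⟩
    rcases (hfib x y).mp hxy with h | ⟨rfl, rfl⟩ | ⟨rfl, rfl⟩
    · exact absurd h hne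
    · exact Set.mem_insert _ _
    · exact Set.mem_insert_of_mem _ rfl

/-- When the folded automaton is deterministic, its kernel is exactly `Fold`. -/
lemma goodPres_complete {M : Autom A} {p q : M.Q} {X : Autom A} {ψ : M.Q → X.Q}
    (hg : GoodPres M p q X ψ) (hdet : X.Deterministic) :
    ∀ {x y}, Fold M p q x y → ψ x = ψ y := by
  obtain ⟨_, _, hpq, _, hE, _⟩ := hg
  refine fold_le (s := fun x y => ψ x = ψ y) hpq (fun _ => rfl) Eq.symm Eq.trans ?_
  intro r r' x y a hrr' he1 he2
  have h1 : (ψ r, a, ψ x) ∈ X.E := (hE _).mpr ⟨(r, a, x), he1, rfl⟩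
  have h2 : (ψ r, a, ψ y) ∈ X.E := by
    have := (hE _).mpr ⟨(r', a, y), he2, rfl⟩
    rwa [← hrr'] at this
  exact hdet _ _ _ _ h1 h2

/-- The quotient by the folding congruence is isomorphic to a deterministic fold. -/
lemma quot_fold_iso {M : Autom A} {p q : M.Q} {X : Autom A} {ψ : M.Q → X.Q}
    (hg : GoodPres M p q X ψ) (hdet : X.Deterministic) :
    (M.quotAut (M.foldSetoid p q)).Isomorphic X := by
  obtain ⟨hsurj, hq0, hpq, hker, hE, hfin⟩ := hg
  have hlift : ∀ x y : M.Q, (M.foldSetoid p q).r x y → ψ x = ψ y :=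
    fun x y h => goodPres_complete ⟨hsurj, hq0, hpq, hker, hE, hfin⟩ hdet h
  let f : Quotient (M.foldSetoid p q) → X.Q := Quotient.lift ψ hlift
  have hbij : Bijective f := by
    constructor
    · intro u v huv
      obtain ⟨x, rfl⟩ := Quotient.mk_surjective u
      obtain ⟨y, rfl⟩ := Quotient.mk_surjective v
      exact Quotient.sound (hker x y huv)
    · intro z
      obtain ⟨x, rfl⟩ := hsurj z
      exact ⟨Quotient.mk _ x, rfl⟩
  refine ⟨Equiv.ofBijective f hbij, ⟨hq0, ?_⟩, ⟨?_, ?_⟩⟩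
  · rintro P a Q ⟨e', he', hPQ⟩
    injection hPQ with c1 c2; injection c2 with c2 c3
    subst c1 c2 c3
    exact (hE _).mpr ⟨e', he', rfl⟩
  · apply (Equiv.ofBijective f hbij).injective
    exact (Equiv.apply_symm_apply _ _).trans hq0.symm
  · intro x a y hxy
    obtain ⟨e', he', hc⟩ := (hE _).mp hxy
    obtain ⟨c1, c2, c3⟩ : x = ψ e'.1 ∧ a = e'.2.1 ∧ y = ψ e'.2.2 := by
      simpa [Prod.ext_iff] using hc
    have hx : (Equiv.ofBijective f hbij).symm x = Quotient.mk _ e'.1 := by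
      apply (Equiv.ofBijective f hbij).injective
      rw [Equiv.apply_symm_apply]
      exact c1
    have hy : (Equiv.ofBijective f hbij).symm y = Quotient.mk _ e'.2.2 := by
      apply (Equiv.ofBijective f hbij).injective
      rw [Equiv.apply_symm_apply]
      exact c3
    refine ⟨e', he', ?_⟩
    exact Prod.ext hx (Prod.ext c2 hy)

/-- Folding chain from any intermediate quotient up to the full folding quotient. -/
lemma chain_to_fold (M : Autom A) (p q p' q' : M.Q)
    (hp'q'F : Fold M p q p' q') (hpqF : Fold M p' q' p q)
    (hfin : {x | ∃ y, Fold M p q x y ∧ x ≠ y}.Finite) :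
    ∀ (n : ℕ) (s : Setoid M.Q), s.r p' q' → (∀ x y, s.r x y → Fold M p q x y) →
      (Quotient.mk s '' {x | ∃ y, Fold M p q x y ∧ x ≠ y}).ncard ≤ n →
      Relation.ReflTransGen Red1 (M.quotAut s) (M.quotAut (M.foldSetoid p q)) := by
  intro n
  induction n with
  | zero =>
    intro s hp's hsub hcard
    by_cases hall : ∀ x y, Fold M p q x y → s.r x y
    · have hs : s = M.foldSetoid p q := Setoid.ext fun a b => ⟨hsub a b, hall a b⟩
      rw [hs]
    · exfalso
      push_neg at hall
      obtain ⟨x0, y0, hf0, hns0⟩ := hall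
      by_cases hclosed : ∀ (r r' s1 s2 : M.Q) (a : Ltr A), s.r r r' →
          (r, a, s1) ∈ M.E → (r', a, s2) ∈ M.E → s.r s1 s2
      · have h1 : ∀ {x y}, Fold M p' q' x y → s.r x y :=
          fold_le hp's s.iseqv.refl s.iseqv.symm s.iseqv.trans
            (fun h e1 e2 => hclosed _ _ _ _ _ h e1 e2)
        have h2 : ∀ {x y}, Fold M p q x y → s.r x y :=
          fold_le (h1 hpqF) s.iseqv.refl s.iseqv.symm s.iseqv.trans
            (fun h e1 e2 => hclosed _ _ _ _ _ h e1 e2)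
        exact hns0 (h2 hf0)
      · push_neg at hclosed
        obtain ⟨r, r', s1, s2, a, hrr', he1, he2, hns⟩ := hclosed
        have hf12 : Fold M p q s1 s2 := Fold.fold (hsub _ _ hrr') he1 he2
        have hne12 : s1 ≠ s2 := fun h => hns (h ▸ s.iseqv.refl s1)
        have hmem1 : s1 ∈ {x | ∃ y, Fold M p q x y ∧ x ≠ y} := ⟨s2, hf12, hne12⟩
        have hmem2 : s2 ∈ {x | ∃ y, Fold M p q x y ∧ x ≠ y} := ⟨s1, hf12.symm, hne12.symm⟩
        have hQne : Quotient.mk s s1 ≠ Quotient.mk s s2 :=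
          fun h => hns (quot_mk_eq.mp h)
        have hlt : 0 < (Quotient.mk s '' {x | ∃ y, Fold M p q x y ∧ x ≠ y}).ncard :=
          (Set.ncard_pos (hfin.image _)).mpr ⟨_, Set.mem_image_of_mem _ hmem1⟩
        omega
  | succ n ih =>
    intro s hp's hsub hcard
    by_cases hall : ∀ x y, Fold M p q x y → s.r x y
    · have hs : s = M.foldSetoid p q := Setoid.ext fun a b => ⟨hsub a b, hall a b⟩
      rw [hs]
    · push_neg at hall
      obtain ⟨x0, y0, hf0, hns0⟩ := hall
      by_cases hclosed : ∀ (r r' s1 s2 : M.Q) (a : Ltr A), s.r r r' →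
          (r, a, s1) ∈ M.E → (r', a, s2) ∈ M.E → s.r s1 s2
      · have h1 : ∀ {x y}, Fold M p' q' x y → s.r x y :=
          fold_le hp's s.iseqv.refl s.iseqv.symm s.iseqv.trans
            (fun h e1 e2 => hclosed _ _ _ _ _ h e1 e2)
        have h2 : ∀ {x y}, Fold M p q x y → s.r x y :=
          fold_le (h1 hpqF) s.iseqv.refl s.iseqv.symm s.iseqv.trans
            (fun h e1 e2 => hclosed _ _ _ _ _ h e1 e2)
        exact absurd (h2 hf0) hns0
      · push_neg at hclosed
        obtain ⟨r, r', s1, s2, a, hrr', he1, he2, hns⟩ := hclosed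
        set supp := {x | ∃ y, Fold M p q x y ∧ x ≠ y} with hsupp
        have hf12 : Fold M p q s1 s2 := Fold.fold (hsub _ _ hrr') he1 he2
        have hne12 : s1 ≠ s2 := fun h => hns (h ▸ s.iseqv.refl s1)
        have hmem1 : s1 ∈ supp := ⟨s2, hf12, hne12⟩
        have hmem2 : s2 ∈ supp := ⟨s1, hf12.symm, hne12.symm⟩
        have hQne : Quotient.mk s s1 ≠ Quotient.mk s s2 :=
          fun h => hns (quot_mk_eq.mp h)
        -- the folding step
        have hstep : Red1 (M.quotAut s) (M.quotAut (mergeSetoid s s1 s2)) := by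
          refine ⟨Quotient.mk s s1, Quotient.mk s s2, Quotient.mk s r, a, hQne,
            ⟨(r, a, s1), he1, rfl⟩, ⟨(r', a, s2), he2, ?_⟩, isIdent_merge M s s1 s2⟩
          exact Prod.ext (Quotient.sound hrr') rfl
        -- invariants for the merged setoid
        have hp's' : (mergeSetoid s s1 s2).r p' q' := Or.inl hp's
        have hsub' : ∀ x y, (mergeSetoid s s1 s2).r x y → Fold M p q x y := by
          rintro x y (h | ⟨h1, h2⟩ | ⟨h1, h2⟩)
          · exact hsub _ _ h
          · exact ((hsub _ _ h1).trans hf12).trans (hsub _ _ h2)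
          · exact ((hsub _ _ h1).trans hf12.symm).trans (hsub _ _ h2)
        -- the measure decreases
        have hcard' : (Quotient.mk (mergeSetoid s s1 s2) '' supp).ncard ≤ n := by
          set f : Quotient s → Quotient (mergeSetoid s s1 s2) :=
            Quotient.lift (Quotient.mk (mergeSetoid s s1 s2))
              (fun a b h => Quotient.sound (Or.inl h)) with hf
          have himg : Quotient.mk (mergeSetoid s s1 s2) '' supp =
              f '' (Quotient.mk s '' supp) := by
            rw [Set.image_image]
            rfl
          have hkey : f '' (Quotient.mk s '' supp) =
              f '' ((Quotient.mk s '' supp) \ {Quotient.mk s s2}) := by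
            apply Set.Subset.antisymm
            · rintro z ⟨t, ht, rfl⟩
              by_cases hts : t = Quotient.mk s s2
              · subst hts
                refine ⟨Quotient.mk s s1, ⟨Set.mem_image_of_mem _ hmem1, hQne⟩, ?_⟩
                show Quotient.mk _ s1 = Quotient.mk _ s2
                exact Quotient.sound (Or.inr (Or.inl ⟨s.iseqv.refl s1, s.iseqv.refl s2⟩))
              · exact ⟨t, ⟨ht, hts⟩, rfl⟩
            · exact Set.image_mono Set.diff_subset
          have h1 : (f '' ((Quotient.mk s '' supp) \ {Quotient.mk s s2})).ncard ≤
              ((Quotient.mk s '' supp) \ {Quotient.mk s s2}).ncard :=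
            Set.ncard_image_le ((hfin.image _).diff)
          have h2 : ((Quotient.mk s '' supp) \ {Quotient.mk s s2}).ncard <
              (Quotient.mk s '' supp).ncard :=
            Set.ncard_diff_singleton_lt_of_mem (Set.mem_image_of_mem _ hmem2)
              (hfin.image _)
          rw [himg, hkey]
          omega
        exact Relation.ReflTransGen.head hstep
          (ih (mergeSetoid s s1 s2) hp's' hsub' hcard')

/-- One direction of Fact 2.1. -/
lemma istep_mono {M : Autom A} (hd : M.Dual) {u : List (Ltr A)} {p p' q q' : M.Q}
    (h1 : M.Path p u p') (h2 : M.Path q u q') (hpq' : p' ≠ q') {N : Autom A}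
    (h : M.IStep p q N) : M.IStep p' q' N := by
  obtain ⟨hpq, N', N''0, hid, ⟨M₁, hr1, hdet, hr2, hterm⟩, hisoN⟩ := h
  have hFp'q' : Fold M p q p' q' := fold_of_paths h1 h2 Fold.base
  have hFpq : Fold M p' q' p q :=
    fold_of_paths (path_inv hd h1) (path_inv hd h2) Fold.base
  obtain ⟨ψ, hg⟩ := goodPres_chain hr1 (goodPres_base hid)
  have hsupp_eq : {x | ∃ y, Fold M p q x y ∧ x ≠ y} =
      {x | ∃ y, ψ x = ψ y ∧ x ≠ y} := by
    ext x
    constructor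
    · rintro ⟨y, hf, hne⟩
      exact ⟨y, goodPres_complete hg hdet hf, hne⟩
    · rintro ⟨y, hk, hne⟩
      exact ⟨y, hg.2.2.2.1 x y hk, hne⟩
  have hfin : {x | ∃ y, Fold M p q x y ∧ x ≠ y}.Finite := by
    rw [hsupp_eq]; exact hg.2.2.2.2.2
  have hchain := chain_to_fold M p q p' q' hFp'q' hFpq hfin _ (M.pairSetoid p' q')
    (Or.inr (Or.inl ⟨rfl, rfl⟩))
    (fun x y h => by
      rcases h with rfl | ⟨rfl, rfl⟩ | ⟨rfl, rfl⟩
      exacts [Fold.refl _, hFp'q', hFp'q'.symm])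
    le_rfl
  have hiso : (M.quotAut (M.foldSetoid p q)).Isomorphic M₁ := quot_fold_iso hg hdet
  obtain ⟨X', hX'chain, hX'iso⟩ := red2star_of_iso hr2 hiso
  refine ⟨hpq', M.quotAut (M.pairSetoid p' q'), X', isIdent_pair M p' q',
    ⟨M.quotAut (M.foldSetoid p q), hchain, quot_fold_det M p q, hX'chain, ?_⟩,
    iso_trans hX'iso hisoN⟩
  intro Z hZ
  exact hterm Z (red2_of_iso (iso_symm hX'iso) hZ)

end Autom

/-- Fact 2.1: if a reduced word `u` labels paths `p → p'` and `q → q'` in a reduced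
inverse automaton, then the i-step identifying `p` and `q` and the i-step identifying
`p'` and `q'` produce the same result. -/
theorem istep_transport
    {A : Type} (M : Autom A) (hMinv : M.IsInv) (hMred : M.IsRed)
    (u : List (Ltr A)) (hured : IsReducedWord u)
    (p p' q q' : M.Q) (h1 : M.Path p u p') (h2 : M.Path q u q')
    (hpq : p ≠ q) (hpq' : p' ≠ q')
    (N : Autom A) (hNinv : N.IsInv) (hNred : N.IsRed) :
    M.IStep p q N ↔ M.IStep p' q' N := by
  have hd := hMinv.2.2
  constructor
  · exact Autom.istep_mono hd h1 h2 hpq'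
  · exact Autom.istep_mono hd (Autom.path_inv hd h1) (Autom.path_inv hd h2) hpq
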